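/- Let 0 < r < R be real numbers and let k ≥ 1 be an integer. Then for every complex polynomial p, sup_{z ∈ ℂ, r ≤ |z| ≤ R} |z^{−k} − p(z)| ≥ r^{−k}. In particular, the function z ↦ z^{−k} on the closed annulus {z ∈ ℂ : r ≤ |z| ≤ R} cannot be approximated uniformly by polynomials. -/

import Mathlib

/-- On the closed annulus `{z : r ≤ |z| ≤ R}` (with `0 < r < R`), every complex polynomial `p`
stays at uniform distance at least `r^{-k}` from the function `z ↦ z^{-k}` (`k ≥ 1`): the sup of
`|z^{-k} - p(z)|` over the annulus is at least `r^{-k}`, i.e. the bound is attained at some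
point of the annulus. In particular `z ↦ z^{-k}` cannot be approximated uniformly by
polynomials on the annulus. -/
theorem annulus_no_polynomial_approx (r R : ℝ) (hr : 0 < r) (hrR : r < R)
    (k : ℕ) (hk : 1 ≤ k) (p : Polynomial ℂ) :
    ∃ z : ℂ, r ≤ ‖z‖ ∧ ‖z‖ ≤ R ∧ r⁻¹ ^ k ≤ ‖(z ^ k)⁻¹ - p.eval z‖ := by
  set q : ℂ → ℂ := fun z => 1 - z ^ k * p.eval z with hq
  -- q is continuous on the sphere of radius r; it attains its max there
  have hqc : Continuous q := by continuity
  have hsc : IsCompact (Metric.sphere (0 : ℂ) r) := isCompact_sphere 0 r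
  have hne : (Metric.sphere (0 : ℂ) r).Nonempty := NormedSpace.sphere_nonempty.2 hr.le
  obtain ⟨z₀, hz₀, hmax⟩ := hsc.exists_isMaxOn hne (hqc.norm.continuousOn)
  have hz₀n : ‖z₀‖ = r := by simpa using hz₀
  -- maximum modulus: ‖q 0‖ ≤ ‖q z₀‖
  have hdiff : DiffContOnCl ℂ q (Metric.ball (0 : ℂ) r) := by
    refine Differentiable.diffContOnCl ?_
    exact (differentiable_const 1).sub ((differentiable_pow k).mul p.differentiable)
  have hfr : ∀ z ∈ frontier (Metric.ball (0 : ℂ) r), ‖q z‖ ≤ ‖q z₀‖ := by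
    intro z hz
    rw [frontier_ball 0 hr.ne'] at hz
    exact hmax hz
  have h1 : ‖q 0‖ ≤ ‖q z₀‖ := by
    refine Complex.norm_le_of_forall_mem_frontier_norm_le Metric.isBounded_ball hdiff hfr ?_
    exact subset_closure (Metric.mem_ball_self hr)
  have hq0 : ‖q 0‖ = 1 := by
    simp [hq, zero_pow (by omega : k ≠ 0)]
  rw [hq0] at h1
  refine ⟨z₀, hz₀n.ge, hz₀n.le.trans hrR.le, ?_⟩
  have hz₀ne : z₀ ≠ 0 := by
    intro h; rw [h] at hz₀n; simp at hz₀n; linarith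
  have key : (z₀ ^ k)⁻¹ - p.eval z₀ = (z₀ ^ k)⁻¹ * q z₀ := by
    field_simp [hq]
    rfl
  rw [key, norm_mul, norm_inv, norm_pow, hz₀n, ← inv_pow]
  calc r⁻¹ ^ k = r⁻¹ ^ k * 1 := by ring
    _ ≤ r⁻¹ ^ k * ‖q z₀‖ := by
        exact mul_le_mul_of_nonneg_left h1 (by positivity)
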